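/- arXiv:2006.03746 — 4 statements merged into one kernel-verified Lean document; each statement's English description precedes it below -/
import Mathlib

section
/- Let n be a set of pairwise disjoint sets S₁, …, S_k of vertices such that each G^2[S_i] is a clique, and suppose each |S_i| ≥ l + 1 for a positive integer l. Let S = S₁ ∪ … ∪ S_k and let O be any vertex cover of G^2[S]. Then |S| ≤ (1 + 1/l)·|O|. -/
open SimpleGraph

variable {V : Type*}

/-- The `r`-th power of a graph: distinct vertices are adjacent iff their
distance in `G` is at most `r` (i.e. there is a walk of length at most `r`). -/
def graphPow (G : SimpleGraph V) (r : ℕ) : SimpleGraph V where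
  Adj u v := u ≠ v ∧ ∃ p : G.Walk u v, p.length ≤ r
  symm := by
    constructor
    rintro u v ⟨h, p, hp⟩
    exact ⟨h.symm, p.reverse, by simpa using hp⟩
  loopless := by constructor; rintro u ⟨h, _⟩; exact h rfl

/-- `C` is a vertex cover of `H`. -/
def isVC (H : SimpleGraph V) (C : Finset V) : Prop :=
  ∀ ⦃u v : V⦄, H.Adj u v → u ∈ C ∨ v ∈ C

/-- `C` covers all edges of `H` with both endpoints in `W` (vertex cover of the
induced subgraph `H[W]`). -/
def isVCOn (H : SimpleGraph V) (W : Finset V) (C : Finset V) : Prop :=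
  ∀ ⦃u v : V⦄, u ∈ W → v ∈ W → H.Adj u v → u ∈ C ∨ v ∈ C

theorem stmt4 [DecidableEq V] (G : SimpleGraph V) (k l : ℕ) (hl : 1 ≤ l)
    (Sets : Fin k → Finset V)
    (hdisj : ∀ i j, i ≠ j → Disjoint (Sets i) (Sets j))
    (hclique : ∀ i, ∀ x ∈ Sets i, ∀ y ∈ Sets i, x ≠ y → (graphPow G 2).Adj x y)
    (hsize : ∀ i, l + 1 ≤ (Sets i).card)
    (O : Finset V)
    (hO : isVCOn (graphPow G 2) (Finset.univ.biUnion Sets) O) :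
    ((Finset.univ.biUnion Sets).card : ℝ) ≤ (1 + 1 / (l : ℝ)) * O.card := by
  have hlpos : (0:ℝ) < l := by exact_mod_cast hl
  -- each S_i \ O has at most one element
  have hkey : ∀ i : Fin k, ((Sets i).card : ℝ) ≤ (1 + 1/(l:ℝ)) * ((Sets i ∩ O).card) := by
    intro i
    have hsub1 : (Sets i \ O).card ≤ 1 := by
      by_contra h
      push_neg at h
      obtain ⟨x, hx, y, hy, hxy⟩ := Finset.one_lt_card.mp h
      obtain ⟨hxS, hxO⟩ := Finset.mem_sdiff.mp hx
      obtain ⟨hyS, hyO⟩ := Finset.mem_sdiff.mp hy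
      have hxW : x ∈ Finset.univ.biUnion Sets :=
        Finset.mem_biUnion.mpr ⟨i, Finset.mem_univ _, hxS⟩
      have hyW : y ∈ Finset.univ.biUnion Sets :=
        Finset.mem_biUnion.mpr ⟨i, Finset.mem_univ _, hyS⟩
      rcases hO hxW hyW (hclique i x hxS y hyS hxy) with h | h
      · exact hxO h
      · exact hyO h
    have hcard : (Sets i).card ≤ (Sets i ∩ O).card + 1 := by
      have := Finset.card_inter_add_card_sdiff (Sets i) O
      omega
    have hge : l ≤ (Sets i ∩ O).card := by
      have := hsize i
      have := Finset.card_inter_add_card_sdiff (Sets i) O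
      omega
    have h1 : ((Sets i).card : ℝ) ≤ ((Sets i ∩ O).card : ℝ) + 1 := by exact_mod_cast hcard
    have h2 : (l : ℝ) ≤ ((Sets i ∩ O).card : ℝ) := by exact_mod_cast hge
    have : (1:ℝ) ≤ ((Sets i ∩ O).card : ℝ) / l := (le_div_iff₀ hlpos).mpr (by linarith)
    calc ((Sets i).card : ℝ) ≤ ((Sets i ∩ O).card : ℝ) + 1 := h1
      _ ≤ ((Sets i ∩ O).card : ℝ) + ((Sets i ∩ O).card : ℝ) / l := by linarith
      _ = (1 + 1/(l:ℝ)) * ((Sets i ∩ O).card) := by ring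
  have hS : ((Finset.univ.biUnion Sets).card : ℝ) = ∑ i : Fin k, ((Sets i).card : ℝ) := by
    rw [Finset.card_biUnion (fun i _ j _ h => hdisj i j h)]
    push_cast; ring
  have hOsum : ∑ i : Fin k, (((Sets i ∩ O).card : ℝ)) ≤ (O.card : ℝ) := by
    have h1 : (Finset.univ.biUnion (fun i => Sets i ∩ O)).card = ∑ i : Fin k, (Sets i ∩ O).card :=
      Finset.card_biUnion (fun i _ j _ h =>
        ((hdisj i j h).mono Finset.inter_subset_left Finset.inter_subset_left))
    have h2 : (Finset.univ.biUnion (fun i => Sets i ∩ O)) ⊆ O := by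
      intro x hx
      obtain ⟨i, _, hx⟩ := Finset.mem_biUnion.mp hx
      exact (Finset.mem_inter.mp hx).2
    have := Finset.card_le_card h2
    rw [h1] at this
    exact_mod_cast this
  rw [hS]
  calc ∑ i : Fin k, ((Sets i).card : ℝ)
      ≤ ∑ i : Fin k, (1 + 1/(l:ℝ)) * ((Sets i ∩ O).card) := Finset.sum_le_sum (fun i _ => hkey i)
    _ = (1 + 1/(l:ℝ)) * ∑ i : Fin k, ((Sets i ∩ O).card : ℝ) := by rw [Finset.mul_sum]
    _ ≤ (1 + 1/(l:ℝ)) * O.card := by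
        apply mul_le_mul_of_nonneg_left hOsum
        positivity
end

section
/- Let G be a graph and partition V(G) into S and U = V(G) \ S. Suppose R* is a minimum vertex cover of G^2[U] and suppose S satisfies |S| ≤ (1+ε)·|O| for every vertex cover O of G^2[S]. Then |S ∪ R*| ≤ (1+ε)·|OPT| where OPT is any minimum vertex cover of G^2, provided S ∪ R* is a vertex cover of G^2. -/
open SimpleGraph

variable {V : Type*}

theorem stmt6 [Fintype V] [DecidableEq V] (G : SimpleGraph V) (ε : ℝ) (hε : 0 ≤ ε)
    (S R OPT : Finset V)
    (hRsub : R ⊆ Sᶜ)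
    (hRvc : isVCOn (graphPow G 2) Sᶜ R)
    (hRmin : ∀ C : Finset V, C ⊆ Sᶜ → isVCOn (graphPow G 2) Sᶜ C → R.card ≤ C.card)
    (hS : ∀ O : Finset V, isVCOn (graphPow G 2) S O → (S.card : ℝ) ≤ (1 + ε) * O.card)
    (hOPTvc : isVC (graphPow G 2) OPT)
    (hOPTmin : ∀ C : Finset V, isVC (graphPow G 2) C → OPT.card ≤ C.card)
    (hcov : isVC (graphPow G 2) (S ∪ R)) :
    ((S ∪ R).card : ℝ) ≤ (1 + ε) * OPT.card := by
  have h1 : isVCOn (graphPow G 2) S (OPT ∩ S) := by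
    intro u v hu hv hadj
    rcases hOPTvc hadj with h | h
    · exact Or.inl (Finset.mem_inter.mpr ⟨h, hu⟩)
    · exact Or.inr (Finset.mem_inter.mpr ⟨h, hv⟩)
  have h2 : isVCOn (graphPow G 2) Sᶜ (OPT ∩ Sᶜ) := by
    intro u v hu hv hadj
    rcases hOPTvc hadj with h | h
    · exact Or.inl (Finset.mem_inter.mpr ⟨h, hu⟩)
    · exact Or.inr (Finset.mem_inter.mpr ⟨h, hv⟩)
  have hR : (R.card : ℝ) ≤ (OPT ∩ Sᶜ).card := by
    exact_mod_cast hRmin _ Finset.inter_subset_right h2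
  have hSle := hS _ h1
  have hsum : ((OPT ∩ S).card : ℝ) + (OPT ∩ Sᶜ).card = OPT.card := by
    have he : OPT ∩ Sᶜ = OPT \ S := by ext x; simp
    rw [he]
    exact_mod_cast Finset.card_inter_add_card_sdiff OPT S
  have hcard : ((S ∪ R).card : ℝ) ≤ S.card + R.card := by
    exact_mod_cast Finset.card_union_le S R
  have hnn : (0:ℝ) ≤ ((OPT ∩ Sᶜ).card : ℝ) := by positivity
  nlinarith [hε, hR, hSle, hsum, hcard, hnn]
end

section
/- Let G be a graph and let H be obtained from G by, for each edge e = {u,v} of G, deleting e and adding three new vertices p_e¹, p_e², p_e³ forming a path p_e¹ − p_e² − p_e³, with p_e¹ additionally adjacent to both u and v (a dangling path gadget; new vertices of different gadgets are distinct). Then G has a vertex cover of size at most W if and only if H² has a vertex cover of size at most W + 2·|E(G)|. -/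
open SimpleGraph

variable {V : Type*}

/-- The graph `H` obtained from `G` by replacing every edge `e = {u,v}` with a
dangling path gadget: three fresh vertices `(e,0) - (e,1) - (e,2)` forming a
path, with `(e,0)` additionally adjacent to both endpoints of `e`; the original
edge is deleted. -/
def gadgetGraph (G : SimpleGraph V) : SimpleGraph (V ⊕ (G.edgeSet × Fin 3)) where
  Adj x y :=
    match x, y with
    | Sum.inl _, Sum.inl _ => False
    | Sum.inl u, Sum.inr (e, i) => i = 0 ∧ u ∈ (e : Sym2 V)
    | Sum.inr (e, i), Sum.inl u => i = 0 ∧ u ∈ (e : Sym2 V)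
    | Sum.inr (e, i), Sum.inr (f, j) => e = f ∧ (i.val + 1 = j.val ∨ j.val + 1 = i.val)
  symm := by
    constructor
    rintro (u | ⟨e, i⟩) (v | ⟨f, j⟩) h <;> simp_all <;> tauto
  loopless := by
    constructor
    rintro (u | ⟨e, i⟩) h <;> simp_all

lemma adj2_iff (H : SimpleGraph V) {u v : V} :
    (graphPow H 2).Adj u v ↔ u ≠ v ∧ (H.Adj u v ∨ ∃ w, H.Adj u w ∧ H.Adj w v) := by
  constructor
  · rintro ⟨hne, p, hp⟩
    refine ⟨hne, ?_⟩
    cases p with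
    | nil => exact absurd rfl hne
    | cons h q =>
      cases q with
      | nil => exact Or.inl h
      | cons h' q' =>
        cases q' with
        | nil => exact Or.inr ⟨_, h, h'⟩
        | cons h'' q'' => simp [SimpleGraph.Walk.length_cons] at hp
  · rintro ⟨hne, h | ⟨w, h1, h2⟩⟩
    · exact ⟨hne, SimpleGraph.Walk.cons h SimpleGraph.Walk.nil, by simp⟩
    · exact ⟨hne, SimpleGraph.Walk.cons h1 (SimpleGraph.Walk.cons h2 SimpleGraph.Walk.nil), by simp⟩

-- adjacency unfolding lemmas
lemma gadget_adj_ll (G : SimpleGraph V) (a b : V) :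
    ¬ (gadgetGraph G).Adj (Sum.inl a) (Sum.inl b) := by
  simp [gadgetGraph]

lemma gadget_adj_lr (G : SimpleGraph V) (a : V) (e : G.edgeSet) (i : Fin 3) :
    (gadgetGraph G).Adj (Sum.inl a) (Sum.inr (e, i)) ↔ i = 0 ∧ a ∈ (e : Sym2 V) := by
  simp [gadgetGraph]

lemma gadget_adj_rl (G : SimpleGraph V) (a : V) (e : G.edgeSet) (i : Fin 3) :
    (gadgetGraph G).Adj (Sum.inr (e, i)) (Sum.inl a) ↔ i = 0 ∧ a ∈ (e : Sym2 V) := by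
  simp [gadgetGraph]

lemma gadget_adj_rr (G : SimpleGraph V) (e f : G.edgeSet) (i j : Fin 3) :
    (gadgetGraph G).Adj (Sum.inr (e, i)) (Sum.inr (f, j)) ↔
      e = f ∧ (i.val + 1 = j.val ∨ j.val + 1 = i.val) := by
  simp [gadgetGraph]

theorem stmt14 [Fintype V] [DecidableEq V] (G : SimpleGraph V) [DecidableRel G.Adj]
    (W : ℕ) :
    (∃ C : Finset V, isVC G C ∧ C.card ≤ W) ↔
    (∃ C : Finset (V ⊕ (G.edgeSet × Fin 3)),
      isVC (graphPow (gadgetGraph G) 2) C ∧ C.card ≤ W + 2 * G.edgeFinset.card) := by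
  have hEcard : (Finset.univ : Finset G.edgeSet).card = G.edgeFinset.card := by
    simp [SimpleGraph.edgeFinset, Set.toFinset_card]
  constructor
  · rintro ⟨C, hC, hCcard⟩
    set C' : Finset (V ⊕ (G.edgeSet × Fin 3)) :=
      C.image Sum.inl ∪
        ((Finset.univ : Finset G.edgeSet) ×ˢ ({0, 1} : Finset (Fin 3))).image Sum.inr with hC'def
    have hinr : ∀ (e : G.edgeSet) (i : Fin 3), i.val ≤ 1 → Sum.inr (e, i) ∈ C' := by
      intro e i hi
      apply Finset.mem_union_right
      apply Finset.mem_image_of_mem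
      simp only [Finset.mem_product, Finset.mem_univ, true_and, Finset.mem_insert,
        Finset.mem_singleton]
      rcases i with ⟨iv, hiv⟩
      interval_cases iv
      · left; rfl
      · right; rfl
    have hinl : ∀ a ∈ C, Sum.inl a ∈ C' :=
      fun a ha => Finset.mem_union_left _ (Finset.mem_image_of_mem _ ha)
    refine ⟨C', ?_, ?_⟩
    · intro u v hadj
      rw [adj2_iff] at hadj
      obtain ⟨hne, hadj | ⟨w, h1, h2⟩⟩ := hadj
      · -- length 1
        rcases u with a | ⟨e, i⟩ <;> rcases v with b | ⟨f, j⟩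
        · exact absurd hadj (gadget_adj_ll G a b)
        · rw [gadget_adj_lr] at hadj
          exact Or.inr (hinr f j (by rw [hadj.1]; decide))
        · rw [gadget_adj_rl] at hadj
          exact Or.inl (hinr e i (by rw [hadj.1]; decide))
        · rw [gadget_adj_rr] at hadj
          obtain ⟨rfl, hij | hij⟩ := hadj
          · exact Or.inl (hinr e i (by have := j.isLt; omega))
          · exact Or.inr (hinr e j (by have := i.isLt; omega))
      · -- length 2
        rcases w with c | ⟨g, k⟩
        · -- middle vertex original: endpoints are (·,0) gadget vertices
          rcases u with a | ⟨e, i⟩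
          · exact absurd h1 (gadget_adj_ll G a c)
          · rw [gadget_adj_rl] at h1
            exact Or.inl (hinr e i (by rw [h1.1]; decide))
        · rcases u with a | ⟨e, i⟩ <;> rcases v with b | ⟨f, j⟩
          · -- inl a - inr(g,k) - inl b : the main case
            rw [gadget_adj_lr] at h1
            rw [gadget_adj_rl] at h2
            have hab : a ≠ b := fun h => hne (by rw [h])
            have hg : (g : Sym2 V) = s(a, b) :=
              (Sym2.mem_and_mem_iff hab).mp ⟨h1.2, h2.2⟩
            have hadj : G.Adj a b := by
              have := g.2
              rw [hg, SimpleGraph.mem_edgeSet] at this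
              exact this
            rcases hC hadj with h | h
            · exact Or.inl (hinl a h)
            · exact Or.inr (hinl b h)
          · rw [gadget_adj_lr] at h1
            rw [gadget_adj_rr] at h2
            obtain ⟨rfl, h2⟩ := h2
            have hk : k.val = 0 := by rw [h1.1]; rfl
            refine Or.inr (hinr g j ?_)
            rcases h2 with h | h <;> omega
          · rw [gadget_adj_rr] at h1
            rw [gadget_adj_rl] at h2
            obtain ⟨rfl, h1⟩ := h1
            have hk : k.val = 0 := by rw [h2.1]; rfl
            refine Or.inl (hinr e i ?_)
            rcases h1 with h | h <;> omega
          · rw [gadget_adj_rr] at h1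
            rw [gadget_adj_rr] at h2
            obtain ⟨heg, h1⟩ := h1
            obtain ⟨hgf, h2⟩ := h2
            subst heg; subst hgf
            by_cases hi : i.val ≤ 1
            · exact Or.inl (hinr e i hi)
            by_cases hj : j.val ≤ 1
            · exact Or.inr (hinr e j hj)
            exfalso
            apply hne
            have h3 := i.isLt; have h4 := j.isLt; have h5 := k.isLt
            have hij : i = j := Fin.ext (by omega)
            rw [hij]
    · -- cardinality
      calc C'.card ≤ (C.image Sum.inl).card +
            (((Finset.univ : Finset G.edgeSet) ×ˢ ({0, 1} : Finset (Fin 3))).image Sum.inr).card :=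
            Finset.card_union_le _ _
        _ ≤ W + 2 * G.edgeFinset.card := by
            rw [Finset.card_image_of_injective _ Sum.inr_injective,
              Finset.card_product, hEcard]
            have h1 : (C.image (Sum.inl : V → V ⊕ (G.edgeSet × Fin 3))).card ≤ W := by
              calc (C.image Sum.inl).card ≤ C.card := Finset.card_image_le
                _ ≤ W := hCcard
            have h2 : ({0, 1} : Finset (Fin 3)).card = 2 := rfl
            rw [h2]
            omega
  · rintro ⟨C', hC', hcard⟩
    classical
    set C : Finset V := Finset.univ.filter (fun v => Sum.inl v ∈ C') with hCdef
    -- the three gadget vertices of each edge form a triangle in the square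
    have hedge : ∀ (e : G.edgeSet) (i j : Fin 3), i ≠ j →
        (graphPow (gadgetGraph G) 2).Adj (Sum.inr (e, i)) (Sum.inr (e, j)) := by
      intro e i j hij
      rw [adj2_iff]
      refine ⟨by simpa using hij, ?_⟩
      have hi := i.isLt
      have hj := j.isLt
      have hne : i.val ≠ j.val := fun hh => hij (Fin.ext hh)
      by_cases h : i.val + 1 = j.val ∨ j.val + 1 = i.val
      · exact Or.inl ((gadget_adj_rr G e e i j).mpr ⟨rfl, h⟩)
      · have h1v : ((1 : Fin 3) : ℕ) = 1 := rfl
        refine Or.inr ⟨Sum.inr (e, 1), ?_, ?_⟩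
        · rw [gadget_adj_rr]; exact ⟨rfl, by omega⟩
        · rw [gadget_adj_rr]; exact ⟨rfl, by omega⟩
    -- every gadget contributes at least two vertices to the cover
    set D : Finset (G.edgeSet × Fin 3) :=
      Finset.univ.filter (fun p => Sum.inr p ∈ C') with hDdef
    have htwo : ∀ e : G.edgeSet, 2 ≤ (D.filter (fun p => p.1 = e)).card := by
      intro e
      have key : ∀ i j : Fin 3, i ≠ j → Sum.inr (e, i) ∈ C' → Sum.inr (e, j) ∈ C' →
          2 ≤ (D.filter (fun p => p.1 = e)).card := by
        intro i j hij hi hj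
        rw [Nat.succ_le_iff, Finset.one_lt_card]
        refine ⟨(e, i), ?_, (e, j), ?_, ?_⟩
        · simp [hDdef, hi]
        · simp [hDdef, hj]
        · simpa using hij
      have h01 := hC' (hedge e 0 1 (by decide))
      have h12 := hC' (hedge e 1 2 (by decide))
      have h02 := hC' (hedge e 0 2 (by decide))
      rcases h01 with h0 | h1
      · rcases h12 with h1 | h2
        · exact key 0 1 (by decide) h0 h1
        · exact key 0 2 (by decide) h0 h2
      · rcases h02 with h0 | h2
        · exact key 0 1 (by decide) h0 h1
        · exact key 1 2 (by decide) h1 h2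
    have hDcard : 2 * G.edgeFinset.card ≤ D.card := by
      have hfib : D.card = ∑ e ∈ (Finset.univ : Finset G.edgeSet),
          (D.filter (fun p => p.1 = e)).card :=
        Finset.card_eq_sum_card_fiberwise (fun p _ => Finset.mem_univ p.1)
      calc 2 * G.edgeFinset.card = ∑ _e ∈ (Finset.univ : Finset G.edgeSet), 2 := by
            rw [Finset.sum_const, smul_eq_mul, hEcard, Nat.mul_comm]
        _ ≤ ∑ e ∈ (Finset.univ : Finset G.edgeSet),
              (D.filter (fun p => p.1 = e)).card :=
            Finset.sum_le_sum (fun e _ => htwo e)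
        _ = D.card := hfib.symm
    -- C is a vertex cover of G
    have hCVC : isVC G C := by
      intro a b hab
      have e_mem : s(a, b) ∈ G.edgeSet := by rwa [SimpleGraph.mem_edgeSet]
      set e : G.edgeSet := ⟨s(a, b), e_mem⟩ with hedef
      have hadj : (graphPow (gadgetGraph G) 2).Adj (Sum.inl a) (Sum.inl b) := by
        rw [adj2_iff]
        refine ⟨by simpa using hab.ne, Or.inr ⟨Sum.inr (e, 0), ?_, ?_⟩⟩
        · rw [gadget_adj_lr]; exact ⟨rfl, by simp [hedef]⟩
        · rw [gadget_adj_rl]; exact ⟨rfl, by simp [hedef]⟩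
      rcases hC' hadj with h | h
      · exact Or.inl (by simp [hCdef, h])
      · exact Or.inr (by simp [hCdef, h])
    refine ⟨C, hCVC, ?_⟩
    -- cardinality: C.card + D.card ≤ C'.card
    have hsub : C.image Sum.inl ∪ D.image Sum.inr ⊆ C' := by
      intro x hx
      rcases Finset.mem_union.mp hx with hx | hx
      · obtain ⟨v, hv, rfl⟩ := Finset.mem_image.mp hx
        simpa [hCdef] using (Finset.mem_filter.mp hv).2
      · obtain ⟨p, hp, rfl⟩ := Finset.mem_image.mp hx
        simpa [hDdef] using (Finset.mem_filter.mp hp).2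
    have hdisj : Disjoint (C.image Sum.inl) (D.image Sum.inr) := by
      rw [Finset.disjoint_left]
      rintro x hx hy
      obtain ⟨v, _, rfl⟩ := Finset.mem_image.mp hx
      obtain ⟨p, _, hp⟩ := Finset.mem_image.mp hy
      exact absurd hp (by simp)
    have hkey : C.card + D.card ≤ C'.card := by
      calc C.card + D.card
          = (C.image Sum.inl).card + (D.image Sum.inr).card := by
            rw [Finset.card_image_of_injective _ Sum.inl_injective,
              Finset.card_image_of_injective _ Sum.inr_injective]
        _ = (C.image Sum.inl ∪ D.image Sum.inr).card :=
            (Finset.card_union_of_disjoint hdisj).symm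
        _ ≤ C'.card := Finset.card_le_card hsub
    omega
end

section
/- Let G be a graph, let OPT_H be a minimum vertex cover of H² where H is obtained from G by inserting a dangling path gadget (three new vertices p_e¹−p_e²−p_e³ with p_e¹ adjacent to the endpoints of e) into every edge e, and let m = |E(G)|. If C_H is a vertex cover of H² with |C_H| ≤ (1+ε)|OPT_H|, then C = C_H ∩ V(G) is a vertex cover of G with |C| ≤ OPT·(1 + ε(1 + 2m/OPT)), where OPT is the minimum vertex-cover size of G. -/
open SimpleGraph

variable {V : Type*}

section AuxLemmas
variable {W : Type*}

lemma pow2_adj {H : SimpleGraph W} {x y : W} :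
    (graphPow H 2).Adj x y ↔ x ≠ y ∧ (H.Adj x y ∨ ∃ z, H.Adj x z ∧ H.Adj z y) := by
  constructor
  · rintro ⟨hne, p, hp⟩
    refine ⟨hne, ?_⟩
    cases p with
    | nil => exact absurd rfl hne
    | cons h q =>
      cases q with
      | nil => exact Or.inl h
      | cons h' q' =>
        cases q' with
        | nil => exact Or.inr ⟨_, h, h'⟩
        | cons h'' q'' => simp [SimpleGraph.Walk.length_cons] at hp
  · rintro ⟨hne, h | ⟨z, h1, h2⟩⟩
    · exact ⟨hne, SimpleGraph.Walk.cons h SimpleGraph.Walk.nil, by simp⟩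
    · exact ⟨hne, SimpleGraph.Walk.cons h1 (SimpleGraph.Walk.cons h2 SimpleGraph.Walk.nil), by simp⟩
variable [DecidableEq V] {G : SimpleGraph V}

lemma gadget_ll {u v : V} : ¬ (gadgetGraph G).Adj (Sum.inl u) (Sum.inl v) := fun h => h

lemma gadget_lr {u : V} {e : G.edgeSet} {i : Fin 3} :
    (gadgetGraph G).Adj (Sum.inl u) (Sum.inr (e, i)) ↔ i = 0 ∧ u ∈ (e : Sym2 V) := Iff.rfl

lemma gadget_rl {u : V} {e : G.edgeSet} {i : Fin 3} :
    (gadgetGraph G).Adj (Sum.inr (e, i)) (Sum.inl u) ↔ i = 0 ∧ u ∈ (e : Sym2 V) := Iff.rfl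

lemma gadget_rr {e f : G.edgeSet} {i j : Fin 3} :
    (gadgetGraph G).Adj (Sum.inr (e, i)) (Sum.inr (f, j)) ↔
      e = f ∧ (i.val + 1 = j.val ∨ j.val + 1 = i.val) := Iff.rfl
lemma tri_adj (e : G.edgeSet) {i j : Fin 3} (hij : i ≠ j) :
    (graphPow (gadgetGraph G) 2).Adj (Sum.inr (e, i)) (Sum.inr (e, j)) := by
  rw [pow2_adj]
  refine ⟨by simp [hij], ?_⟩
  fin_cases i <;> fin_cases j <;>
    first
      | exact absurd rfl hij
      | exact Or.inl ⟨rfl, by decide⟩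
      | exact Or.inr ⟨Sum.inr (e, 1), ⟨rfl, by decide⟩, ⟨rfl, by decide⟩⟩

lemma two_le_tri {CH : Finset (V ⊕ (G.edgeSet × Fin 3))}
    (hCH : isVC (graphPow (gadgetGraph G) 2) CH) (e : G.edgeSet) :
    2 ≤ (Finset.univ.filter fun i : Fin 3 => Sum.inr (e, i) ∈ CH).card := by
  have key : ∀ i j : Fin 3, i ≠ j → Sum.inr (e, i) ∈ CH ∨ Sum.inr (e, j) ∈ CH :=
    fun i j h => hCH (tri_adj e h)
  have h1 : (Finset.univ.filter fun i : Fin 3 => ¬ Sum.inr (e, i) ∈ CH).card ≤ 1 := by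
    apply Finset.card_le_one.mpr
    intro a ha b hb
    simp only [Finset.mem_filter, Finset.mem_univ, true_and] at ha hb
    by_contra hab
    rcases key a b hab with h | h <;> tauto
  have h2 := Finset.card_filter_add_card_filter_not
    (s := (Finset.univ : Finset (Fin 3))) (p := fun i : Fin 3 => Sum.inr (e, i) ∈ CH)
  simp only [Finset.card_univ, Fintype.card_fin] at h2
  omega
lemma card_decomp [Fintype V] [DecidableRel G.Adj] {CH : Finset (V ⊕ (G.edgeSet × Fin 3))}
    (hCH : isVC (graphPow (gadgetGraph G) 2) CH) :
    (Finset.univ.filter fun v : V => Sum.inl v ∈ CH).card + 2 * G.edgeFinset.card ≤ CH.card := by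
  classical
  set A := Finset.univ.filter fun v : V => Sum.inl v ∈ CH with hAdef
  set S := Finset.univ.filter fun p : G.edgeSet × Fin 3 => Sum.inr p ∈ CH with hSdef
  have h1 : CH.filter (fun x => x.isLeft) = A.image Sum.inl := by
    ext x
    rcases x with u | p <;> simp [hAdef]
  have h2 : CH.filter (fun x => ¬ x.isLeft) = S.image Sum.inr := by
    ext x
    rcases x with u | p <;> simp [hSdef]
  have hA : (CH.filter (fun x => x.isLeft)).card = A.card := by
    rw [h1, Finset.card_image_of_injective _ Sum.inl_injective]
  have hS : (CH.filter (fun x => ¬ x.isLeft)).card = S.card := by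
    rw [h2, Finset.card_image_of_injective _ Sum.inr_injective]
  have hsum := Finset.card_filter_add_card_filter_not
    (s := CH) (p := fun x => x.isLeft)
  have hmcard : G.edgeFinset.card = Fintype.card G.edgeSet := by
    simp [SimpleGraph.edgeFinset, Set.toFinset_card]
  have hfib := Finset.card_eq_sum_card_fiberwise
    (s := S) (t := Finset.univ) (f := Prod.fst) (fun x _ => Finset.mem_univ _)
  have hS2 : 2 * G.edgeFinset.card ≤ S.card := by
    rw [hmcard]
    calc 2 * Fintype.card G.edgeSet = ∑ _e : G.edgeSet, 2 := by
          simp [mul_comm, Finset.sum_const, Finset.card_univ]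
      _ ≤ ∑ e : G.edgeSet, (S.filter fun p => p.1 = e).card := by
          refine Finset.sum_le_sum fun e _ => ?_
          refine le_trans (two_le_tri hCH e)
            (Finset.card_le_card_of_injOn (fun i => (e, i)) ?_ ?_)
          · intro i hi
            simp only [Finset.mem_filter, Finset.mem_univ, true_and, hSdef] at hi ⊢
            simpa [hSdef] using hi
          · intro a _ b _ h
            simpa using h
      _ = S.card := hfib.symm
  omega
lemma Dcover [Fintype V] [DecidableRel G.Adj] (OPT : Finset V) (hOPTvc : isVC G OPT) :
    isVC (graphPow (gadgetGraph G) 2)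
      ((OPT.image Sum.inl ∪
          (Finset.univ.image fun e : G.edgeSet => Sum.inr (e, (0 : Fin 3)))) ∪
        (Finset.univ.image fun e : G.edgeSet => Sum.inr (e, (1 : Fin 3)))) := by
  classical
  intro x y hadj
  rw [pow2_adj] at hadj
  obtain ⟨hne, hc⟩ := hadj
  have hD0 : ∀ (f : G.edgeSet) (j : Fin 3), j ≠ 2 →
      Sum.inr (f, j) ∈ ((OPT.image Sum.inl ∪
          (Finset.univ.image fun e : G.edgeSet => Sum.inr (e, (0 : Fin 3)))) ∪
        (Finset.univ.image fun e : G.edgeSet => Sum.inr (e, (1 : Fin 3)))) := by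
    intro f j hj
    fin_cases j
    · exact Finset.mem_union_left _ (Finset.mem_union_right _ (by simp))
    · exact Finset.mem_union_right _ (by simp)
    · exact absurd rfl hj
  have hDop : ∀ u ∈ OPT, Sum.inl u ∈ ((OPT.image Sum.inl ∪
          (Finset.univ.image fun e : G.edgeSet => Sum.inr (e, (0 : Fin 3)))) ∪
        (Finset.univ.image fun e : G.edgeSet => Sum.inr (e, (1 : Fin 3)))) := by
    intro u hu
    exact Finset.mem_union_left _ (Finset.mem_union_left _ (Finset.mem_image_of_mem _ hu))
  rcases x with u | ⟨e, i⟩ <;> rcases y with v | ⟨f, j⟩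
  · -- inl / inl
    rcases hc with h | ⟨z, h1, h2⟩
    · exact absurd h gadget_ll
    rcases z with w | ⟨g, k⟩
    · exact absurd h1 gadget_ll
    rw [gadget_lr] at h1
    rw [gadget_rl] at h2
    have huv : u ≠ v := fun h => hne (by rw [h])
    have hg : (g : Sym2 V) = s(u, v) := (Sym2.mem_and_mem_iff huv).mp ⟨h1.2, h2.2⟩
    have hadj' : G.Adj u v := by
      have h2' := g.2
      rw [hg] at h2'
      exact h2'
    rcases hOPTvc hadj' with h | h
    · exact Or.inl (hDop u h)
    · exact Or.inr (hDop v h)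
  · -- inl / inr
    by_cases hj : j = 2
    · subst hj
      exfalso
      rcases hc with h | ⟨z, h1, h2⟩
      · rw [gadget_lr] at h
        exact absurd h.1 (by decide)
      rcases z with w | ⟨g, k⟩
      · exact absurd h1 gadget_ll
      rw [gadget_lr] at h1
      rw [gadget_rr] at h2
      have hk : k.val = 0 := by rw [h1.1]; rfl
      have := h2.2
      omega
    · exact Or.inr (hD0 f j hj)
  · -- inr / inl
    by_cases hi : i = 2
    · subst hi
      exfalso
      rcases hc with h | ⟨z, h1, h2⟩
      · rw [gadget_rl] at h
        exact absurd h.1 (by decide)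
      rcases z with w | ⟨g, k⟩
      · exact absurd h2 gadget_ll
      rw [gadget_rr] at h1
      rw [gadget_rl] at h2
      have hk : k.val = 0 := by rw [h2.1]; rfl
      have := h1.2
      omega
    · exact Or.inl (hD0 e i hi)
  · -- inr / inr
    by_cases hi : i = 2
    · by_cases hj : j = 2
      · subst hi; subst hj
        exfalso
        rcases hc with h | ⟨z, h1, h2⟩
        · rw [gadget_rr] at h
          have := h.2
          omega
        rcases z with w | ⟨g, k⟩
        · rw [gadget_rl] at h1
          exact absurd h1.1 (by decide)
        rw [gadget_rr] at h1
        rw [gadget_rr] at h2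
        exact hne (by rw [h1.1, h2.1])
      · exact Or.inr (hD0 f j hj)
    · exact Or.inl (hD0 e i hi)
end AuxLemmas

theorem stmt19 [Fintype V] [DecidableEq V] (G : SimpleGraph V) [DecidableRel G.Adj]
    (ε : ℝ) (hε : 0 ≤ ε)
    (OPT : Finset V)
    (hOPTvc : isVC G OPT)
    (hOPTmin : ∀ C : Finset V, isVC G C → OPT.card ≤ C.card)
    (hOPTpos : 1 ≤ OPT.card)
    (hm : 1 ≤ G.edgeFinset.card)
    (OPTH : Finset (V ⊕ (G.edgeSet × Fin 3)))
    (hOPTHvc : isVC (graphPow (gadgetGraph G) 2) OPTH)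
    (hOPTHmin : ∀ C, isVC (graphPow (gadgetGraph G) 2) C → OPTH.card ≤ C.card)
    (CH : Finset (V ⊕ (G.edgeSet × Fin 3)))
    (hCH : isVC (graphPow (gadgetGraph G) 2) CH)
    (hCHapx : (CH.card : ℝ) ≤ (1 + ε) * OPTH.card) :
    isVC G (Finset.univ.filter (fun v : V => Sum.inl v ∈ CH)) ∧
    ((Finset.univ.filter (fun v : V => Sum.inl v ∈ CH)).card : ℝ) ≤
      (OPT.card : ℝ) *
        (1 + ε * (1 + 2 * (G.edgeFinset.card : ℝ) / (OPT.card : ℝ))) := by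
  classical
  have hmcard : (Finset.univ : Finset G.edgeSet).card = G.edgeFinset.card := by
    simp [SimpleGraph.edgeFinset, Set.toFinset_card, Finset.card_univ]
  constructor
  · -- vertex cover
    intro u v huv
    have hadj2 : (graphPow (gadgetGraph G) 2).Adj (Sum.inl u) (Sum.inl v) := by
      rw [pow2_adj]
      refine ⟨by simp [huv.ne], Or.inr ⟨Sum.inr (⟨s(u, v), huv⟩, 0), ?_, ?_⟩⟩
      · exact gadget_lr.mpr ⟨rfl, by simp⟩
      · exact gadget_rl.mpr ⟨rfl, by simp⟩
    rcases hCH hadj2 with h | h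
    · exact Or.inl (by simp [h])
    · exact Or.inr (by simp [h])
  · -- cardinality
    have hmain := card_decomp hCH
    -- bound on OPTH
    have hDcard : OPTH.card ≤ OPT.card + 2 * G.edgeFinset.card := by
      refine le_trans (hOPTHmin _ (Dcover OPT hOPTvc)) ?_
      refine le_trans (Finset.card_union_le _ _) ?_
      have := Finset.card_union_le
        (OPT.image (Sum.inl : V → V ⊕ (G.edgeSet × Fin 3)))
        (Finset.univ.image fun e : G.edgeSet => Sum.inr (e, (0 : Fin 3)))
      have h1 := Finset.card_image_le (s := OPT)
        (f := (Sum.inl : V → V ⊕ (G.edgeSet × Fin 3)))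
      have h2 := Finset.card_image_le (s := (Finset.univ : Finset G.edgeSet))
        (f := fun e : G.edgeSet => (Sum.inr (e, (0 : Fin 3)) : V ⊕ (G.edgeSet × Fin 3)))
      have h3 := Finset.card_image_le (s := (Finset.univ : Finset G.edgeSet))
        (f := fun e : G.edgeSet => (Sum.inr (e, (1 : Fin 3)) : V ⊕ (G.edgeSet × Fin 3)))
      omega
    -- real arithmetic
    set C := Finset.univ.filter (fun v : V => Sum.inl v ∈ CH) with hCdef
    have hoptR : (1 : ℝ) ≤ (OPT.card : ℝ) := by exact_mod_cast hOPTpos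
    have hopt0 : (OPT.card : ℝ) ≠ 0 := by linarith
    have hmR : (1 : ℝ) ≤ (G.edgeFinset.card : ℝ) := by exact_mod_cast hm
    have hmainR : (C.card : ℝ) + 2 * (G.edgeFinset.card : ℝ) ≤ (CH.card : ℝ) := by
      exact_mod_cast hmain
    have hDcardR : (OPTH.card : ℝ) ≤ (OPT.card : ℝ) + 2 * (G.edgeFinset.card : ℝ) := by
      exact_mod_cast hDcard
    have hrhs : (OPT.card : ℝ) * (1 + ε * (1 + 2 * (G.edgeFinset.card : ℝ) / (OPT.card : ℝ)))
        = (OPT.card : ℝ) + ε * (OPT.card : ℝ) + ε * (2 * (G.edgeFinset.card : ℝ)) := by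
      field_simp
      ring
    rw [hrhs]
    have hOPTH0 : (0 : ℝ) ≤ (OPTH.card : ℝ) := by positivity
    nlinarith [mul_le_mul_of_nonneg_left hDcardR hε]
end
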